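/- Fix 1 < p < 2 and let X_n be the span of the first n unit vectors in l_p (X_0 = {0}). In the space K(X_n) of sequences (x_i), x_i ∈ X_i, with finite K-norm ||(x_i)||_K = sup_n ||(x_0,...,x_n,0,0,...)||_J, define f_i = (0,...,0, e_i^i, e_i^{i+1}, ...) where e_i^n denotes the i-th unit vector viewed in X_n for n ≥ i. Then for all finitely supported scalars (a_i): (sum_i |a_i|^p)^{1/p} ≤ ||sum_i a_i f_i||_K ≤ 2^{1/2} (sum_i |a_i|^p)^{1/p}. In particular (f_i) is equivalent to the unit vector basis of l_p. -/

import Mathlib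

open Finset

/-- Square of the Bellenot `J`-norm. -/
noncomputable def jnormSq {E : Type*} [SeminormedAddCommGroup E] (x : ℕ → E) : ℝ :=
  sSup {r : ℝ | ∃ (k : ℕ) (P : ℕ → ℕ), 0 < k ∧ StrictMono P ∧
    r = (∑ i ∈ range (k - 1), ‖x (P i) - x (P (i + 1))‖ ^ 2) + ‖x (P (k - 1))‖ ^ 2}

/-- The Bellenot `J`-norm. -/
noncomputable def jnorm {E : Type*} [SeminormedAddCommGroup E] (x : ℕ → E) : ℝ :=
  Real.sqrt (jnormSq x / 2)

/-- The `K`-norm: `‖(x i)‖_K = sup_n ‖(x 0, …, x n, 0, 0, …)‖_J`. -/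
noncomputable def knorm {E : Type*} [SeminormedAddCommGroup E] (x : ℕ → E) : ℝ :=
  ⨆ n : ℕ, jnorm (fun k => if k ≤ n then x k else 0)

private lemma bellenot_add_rpow {x y q : ℝ} (hx : 0 ≤ x) (hy : 0 ≤ y) (hq : 1 ≤ q) :
    x ^ q + y ^ q ≤ (x + y) ^ q := by
  lift x to NNReal using hx
  lift y to NNReal using hy
  exact_mod_cast NNReal.add_rpow_le_rpow_add x y hq

private lemma bellenot_tele {u : ℕ → ℝ} (hu : Monotone u) {P : ℕ → ℕ} (hP : Monotone P)
    {q : ℝ} (hq : 1 ≤ q) (m : ℕ) :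
    ∑ i ∈ range m, (u (P (i + 1)) - u (P i)) ^ q ≤ (u (P m) - u (P 0)) ^ q := by
  induction m with
  | zero =>
    rw [Finset.range_zero, Finset.sum_empty, sub_self,
      Real.zero_rpow (by intro h; rw [h] at hq; linarith)]
  | succ m ih =>
    rw [Finset.sum_range_succ]
    have h1 : (0:ℝ) ≤ u (P m) - u (P 0) := sub_nonneg.2 (hu (hP (Nat.zero_le m)))
    have h2 : (0:ℝ) ≤ u (P (m + 1)) - u (P m) := sub_nonneg.2 (hu (hP (Nat.le_succ m)))
    calc ∑ i ∈ range m, (u (P (i + 1)) - u (P i)) ^ q + (u (P (m + 1)) - u (P m)) ^ q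
        ≤ (u (P m) - u (P 0)) ^ q + (u (P (m + 1)) - u (P m)) ^ q :=
          add_le_add_left ih _
      _ ≤ ((u (P m) - u (P 0)) + (u (P (m + 1)) - u (P m))) ^ q :=
          bellenot_add_rpow h1 h2 hq
      _ = (u (P (m + 1)) - u (P 0)) ^ q := by ring_nf

private lemma bellenot_aux_mem_bound {E : Type*} [SeminormedAddCommGroup E]
    (x : ℕ → E) (u : ℕ → ℝ) (S q : ℝ) (n : ℕ)
    (hq1 : 1 ≤ q) (hu : Monotone u) (hu0 : ∀ m, 0 ≤ u m) (huS : ∀ m, u m ≤ S)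
    (hx0 : ∀ m, n < m → x m = 0)
    (hxn : ∀ m, m ≤ n → ‖x m‖ ^ 2 = u m ^ q)
    (hdiff : ∀ m m', m ≤ m' → m' ≤ n → ‖x m' - x m‖ ^ 2 = (u m' - u m) ^ q)
    {r : ℝ}
    (hr : ∃ (k : ℕ) (P : ℕ → ℕ), 0 < k ∧ StrictMono P ∧
      r = (∑ i ∈ range (k - 1), ‖x (P i) - x (P (i + 1))‖ ^ 2) + ‖x (P (k - 1))‖ ^ 2) :
    r ≤ 2 * S ^ q := by
  obtain ⟨k, P, hk, hP, rfl⟩ := hr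
  have hPm := hP.monotone
  have hq0 : (0:ℝ) ≤ q := by linarith
  have hS0 : (0:ℝ) ≤ S := le_trans (hu0 0) (huS 0)
  have hSq : (0:ℝ) ≤ S ^ q := Real.rpow_nonneg hS0 q
  have hub : ∀ m m', m ≤ m' → (u m' - u m) ^ q ≤ S ^ q := fun m m' h =>
    Real.rpow_le_rpow (sub_nonneg.2 (hu h)) (by linarith [huS m', hu0 m]) hq0
  have hub2 : ∀ m, u m ^ q ≤ S ^ q := fun m =>
    Real.rpow_le_rpow (hu0 m) (huS m) hq0
  by_cases hlast : P (k - 1) ≤ n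
  · have hterm : ∀ i ∈ range (k - 1), ‖x (P i) - x (P (i + 1))‖ ^ 2
        = (u (P (i + 1)) - u (P i)) ^ q := by
      intro i hi
      rw [mem_range] at hi
      rw [norm_sub_rev]
      exact hdiff _ _ (hPm (Nat.le_succ i)) (le_trans (hPm (by omega)) hlast)
    rw [Finset.sum_congr rfl hterm, hxn _ hlast]
    have h1 := bellenot_tele hu hPm hq1 (k - 1)
    have h2 := hub (P 0) (P (k - 1)) (hPm (Nat.zero_le _))
    linarith [hub2 (P (k - 1))]
  · push_neg at hlast
    have hlast0 : ‖x (P (k - 1))‖ ^ 2 = (0:ℝ) := by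
      rw [hx0 _ hlast, norm_zero]
      norm_num
    by_cases hJ : ((range k).filter (fun i => P i ≤ n)).Nonempty
    · set j := ((range k).filter (fun i => P i ≤ n)).max' hJ with hj
      have hjmem : j ∈ (range k).filter (fun i => P i ≤ n) := Finset.max'_mem _ hJ
      rw [mem_filter, mem_range] at hjmem
      obtain ⟨hjk, hjn⟩ := hjmem
      have hgt : ∀ i, j < i → n < P i := by
        intro i hi
        rcases lt_or_ge i k with h | h
        · by_contra h'
          push_neg at h'
          have hij : i ≤ j := Finset.le_max' ((range k).filter (fun i => P i ≤ n)) i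
            (mem_filter.2 ⟨mem_range.2 h, h'⟩)
          omega
        · exact lt_of_lt_of_le hlast (hPm (by omega))
      have hjk1 : j < k - 1 := by
        by_contra h
        push_neg at h
        have : j = k - 1 := by omega
        rw [this] at hjn
        omega
      have hsplit : ∑ i ∈ range (k - 1), ‖x (P i) - x (P (i + 1))‖ ^ 2
          = ((∑ i ∈ range j, ‖x (P i) - x (P (i + 1))‖ ^ 2)
              + ‖x (P j) - x (P (j + 1))‖ ^ 2)
            + ∑ i ∈ Finset.Ico (j + 1) (k - 1), ‖x (P i) - x (P (i + 1))‖ ^ 2 := by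
        rw [← Finset.sum_range_succ]
        rw [Finset.range_eq_Ico, Finset.range_eq_Ico]
        exact (Finset.sum_Ico_consecutive (fun i => ‖x (P i) - x (P (i + 1))‖ ^ 2) (Nat.zero_le (j + 1)) (show j + 1 ≤ k - 1 by omega)).symm
      have h3 : ∑ i ∈ Finset.Ico (j + 1) (k - 1), ‖x (P i) - x (P (i + 1))‖ ^ 2 = 0 := by
        refine Finset.sum_eq_zero fun i hi => ?_
        rw [Finset.mem_Ico] at hi
        rw [hx0 _ (hgt i (by omega)), hx0 _ (hgt (i + 1) (by omega)), sub_zero, norm_zero]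
        norm_num
      have h4 : ‖x (P j) - x (P (j + 1))‖ ^ 2 ≤ S ^ q := by
        rw [hx0 _ (hgt (j + 1) (by omega)), sub_zero, hxn _ hjn]
        exact hub2 _
      have h5 : ∑ i ∈ range j, ‖x (P i) - x (P (i + 1))‖ ^ 2 ≤ S ^ q := by
        have hterm : ∀ i ∈ range j, ‖x (P i) - x (P (i + 1))‖ ^ 2
            = (u (P (i + 1)) - u (P i)) ^ q := by
          intro i hi
          rw [mem_range] at hi
          rw [norm_sub_rev]
          exact hdiff _ _ (hPm (Nat.le_succ i)) (le_trans (hPm (by omega)) hjn)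
        rw [Finset.sum_congr rfl hterm]
        exact le_trans (bellenot_tele hu hPm hq1 j) (hub _ _ (hPm (Nat.zero_le j)))
      rw [hsplit, hlast0, h3]
      linarith
    · have hgt : ∀ i, n < P i := by
        intro i
        rcases lt_or_ge i k with h | h
        · by_contra h'
          push_neg at h'
          exact hJ ⟨i, mem_filter.2 ⟨mem_range.2 h, h'⟩⟩
        · exact lt_of_lt_of_le hlast (hPm (by omega))
      have h0 : ∑ i ∈ range (k - 1), ‖x (P i) - x (P (i + 1))‖ ^ 2 = 0 := by
        refine Finset.sum_eq_zero fun i _ => ?_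
        rw [hx0 _ (hgt i), hx0 _ (hgt (i + 1)), sub_zero, norm_zero]
        norm_num
      rw [h0, hlast0]
      linarith

/-- For `1 < p < 2`, `X n` the span of the first `n` unit vectors of `ℓ_p`,
and `f i = (0, …, 0, e i, e i, …)` (the `i`-th unit vector appearing from position `i`
on) in `K(X n)`, one has for all finitely supported scalars `(a i)`:
`(∑ |a i|^p)^{1/p} ≤ ‖∑ a i • f i‖_K ≤ 2^{1/2} (∑ |a i|^p)^{1/p}`. -/
theorem bellenot_f_sequence_equivalent_lp_basis
    (p : ℝ) (hp : 1 < p) (hp2 : p < 2) [Fact (1 ≤ ENNReal.ofReal p)]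
    (a : ℕ → ℝ) (s : Finset ℕ) (hs : ∀ i ∈ s, 1 ≤ i) :
    letI e : ℕ → lp (fun _ : ℕ => ℝ) (ENNReal.ofReal p) :=
      fun i => lp.single (ENNReal.ofReal p) i (1 : ℝ)
    letI F : ℕ → lp (fun _ : ℕ => ℝ) (ENNReal.ofReal p) :=
      fun n => ∑ i ∈ s, if i ≤ n then a i • e i else 0
    (∑ i ∈ s, |a i| ^ p) ^ (1 / p) ≤ knorm F ∧
      knorm F ≤ Real.sqrt 2 * (∑ i ∈ s, |a i| ^ p) ^ (1 / p) := by
  have hp0 : 0 < p := by linarith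
  have hpne : p ≠ 0 := ne_of_gt hp0
  have hptr : (ENNReal.ofReal p).toReal = p := ENNReal.toReal_ofReal hp0.le
  set q : ℝ := 2 / p with hqdef
  have hq1 : 1 ≤ q := by rw [hqdef, le_div_iff₀ hp0]; linarith
  set S : ℝ := ∑ i ∈ s, |a i| ^ p with hSdef
  have hS0 : 0 ≤ S := by
    rw [hSdef]
    exact Finset.sum_nonneg fun i _ => Real.rpow_nonneg (abs_nonneg _) p
  set A : ℝ := S ^ (1 / p) with hAdef
  have hA0 : 0 ≤ A := Real.rpow_nonneg hS0 _
  have hSq0 : 0 ≤ S ^ q := Real.rpow_nonneg hS0 q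
  have hA2 : A ^ (2:ℕ) = S ^ q := by
    rw [hAdef, ← Real.rpow_natCast (S ^ (1 / p)) 2, ← Real.rpow_mul hS0, hqdef]
    congr 1
    push_cast
    field_simp
  have hsq : ∀ v : lp (fun _ : ℕ => ℝ) (ENNReal.ofReal p),
      ‖v‖ ^ (2:ℕ) = (‖v‖ ^ p) ^ q := by
    intro v
    rw [← Real.rpow_natCast ‖v‖ 2, ← Real.rpow_mul (norm_nonneg v), hqdef]
    congr 1
    push_cast
    field_simp
  have hnorm : ∀ t : Finset ℕ,
      ‖(∑ i ∈ t, a i • lp.single (ENNReal.ofReal p) i (1:ℝ) :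
          lp (fun _ : ℕ => ℝ) (ENNReal.ofReal p))‖ ^ p = ∑ i ∈ t, |a i| ^ p := by
    intro t
    have h1 : ∀ i, a i • (lp.single (ENNReal.ofReal p) i (1:ℝ) :
          lp (fun _ : ℕ => ℝ) (ENNReal.ofReal p))
        = (lp.single (ENNReal.ofReal p) i (a i) : lp (fun _ : ℕ => ℝ) (ENNReal.ofReal p)) := by
      intro i
      rw [← lp.single_smul]
      norm_num
    simp only [h1]
    have h2 := lp.norm_sum_single (p := ENNReal.ofReal p) (E := fun _ : ℕ => ℝ)
      (by rw [hptr]; exact hp0) a t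
    simp only [hptr, Real.norm_eq_abs] at h2
    exact h2
  have key : ∀ F : ℕ → lp (fun _ : ℕ => ℝ) (ENNReal.ofReal p),
      (∀ m, F m = ∑ i ∈ s.filter (· ≤ m), a i • lp.single (ENNReal.ofReal p) i (1:ℝ)) →
      A ≤ knorm F ∧ knorm F ≤ Real.sqrt 2 * A := by
    intro F hF
    set X : ℕ → ℕ → lp (fun _ : ℕ => ℝ) (ENNReal.ofReal p) :=
      fun n m => if m ≤ n then F m else 0 with hX
    have hbound : ∀ n r, (∃ (k : ℕ) (P : ℕ → ℕ), 0 < k ∧ StrictMono P ∧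
        r = (∑ i ∈ range (k - 1), ‖X n (P i) - X n (P (i + 1))‖ ^ 2) + ‖X n (P (k - 1))‖ ^ 2) →
        r ≤ 2 * S ^ q := by
      intro n r hr
      have hfe : ∀ m, m ≤ n → s.filter (fun i => i ≤ m ∧ i ≤ n) = s.filter (· ≤ m) := by
        intro m hm
        refine Finset.filter_congr fun i _ => ?_
        constructor
        · exact fun h => h.1
        · exact fun h => ⟨h, le_trans h hm⟩
      refine bellenot_aux_mem_bound (X n)
        (fun m => ∑ i ∈ s.filter (fun i => i ≤ m ∧ i ≤ n), |a i| ^ p) S q n hq1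
        ?_ ?_ ?_ ?_ ?_ ?_ hr
      · intro m m' h
        refine Finset.sum_le_sum_of_subset_of_nonneg ?_
          (fun i _ _ => Real.rpow_nonneg (abs_nonneg _) p)
        intro i hi
        rw [Finset.mem_filter] at hi ⊢
        exact ⟨hi.1, le_trans hi.2.1 h, hi.2.2⟩
      · intro m
        exact Finset.sum_nonneg fun i _ => Real.rpow_nonneg (abs_nonneg _) p
      · intro m
        rw [hSdef]
        exact Finset.sum_le_sum_of_subset_of_nonneg (Finset.filter_subset _ _)
          (fun i _ _ => Real.rpow_nonneg (abs_nonneg _) p)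
      · intro m hm
        show (if m ≤ n then F m else 0) = 0
        rw [if_neg (by omega)]
      · intro m hm
        show ‖(if m ≤ n then F m else 0)‖ ^ (2:ℕ) = _
        rw [if_pos hm, hsq (F m), hF m, hnorm (s.filter (· ≤ m))]
        beta_reduce
        rw [hfe m hm]
      · intro m m' hmm' hm'n
        have hmn : m ≤ n := le_trans hmm' hm'n
        show ‖(if m' ≤ n then F m' else 0) - (if m ≤ n then F m else 0)‖ ^ (2:ℕ) = _
        rw [if_pos hm'n, if_pos hmn, hsq (F m' - F m)]
        have hsub : s.filter (· ≤ m) ⊆ s.filter (· ≤ m') := by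
          intro i hi
          rw [Finset.mem_filter] at hi ⊢
          exact ⟨hi.1, le_trans hi.2 hmm'⟩
        have hdiffeq : F m' - F m
            = ∑ i ∈ s.filter (· ≤ m') \ s.filter (· ≤ m),
                a i • lp.single (ENNReal.ofReal p) i (1:ℝ) := by
          rw [hF m, hF m', ← Finset.sum_sdiff hsub, add_sub_cancel_right]
        rw [hdiffeq, hnorm (s.filter (· ≤ m') \ s.filter (· ≤ m))]
        congr 1
        beta_reduce
        rw [eq_sub_iff_add_eq, hfe m hmn, hfe m' hm'n, Finset.sum_sdiff hsub]
    have hkn : knorm F = ⨆ n, jnorm (X n) := by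
      simp only [knorm, hX]
    have hjle : ∀ n, jnorm (X n) ≤ A := by
      intro n
      have h1 : jnormSq (X n) ≤ 2 * S ^ q := by
        rw [jnormSq]
        apply Real.sSup_le
        · intro r hr
          exact hbound n r hr
        · linarith
      show Real.sqrt (jnormSq (X n) / 2) ≤ A
      calc Real.sqrt (jnormSq (X n) / 2) ≤ Real.sqrt (S ^ q) :=
            Real.sqrt_le_sqrt (by linarith)
        _ = A := by rw [← hA2, Real.sqrt_sq hA0]
    constructor
    · -- lower bound
      set N := s.sup id + 1 with hNdef
      have hNs : ∀ i ∈ s, i ≤ N := fun i hi =>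
        le_trans (Finset.le_sup (f := id) hi) (Nat.le_succ _)
      have hF0 : F 0 = 0 := by
        rw [hF 0]
        refine Finset.sum_eq_zero fun i hi => ?_
        rw [Finset.mem_filter] at hi
        have := hs i hi.1
        omega
      have hFN : ‖F N‖ ^ (2:ℕ) = S ^ q := by
        have hFNe : F N = ∑ i ∈ s, a i • lp.single (ENNReal.ofReal p) i (1:ℝ) := by
          rw [hF N]
          refine Finset.sum_congr ?_ fun i _ => rfl
          exact Finset.filter_true_of_mem fun i hi => hNs i hi
        rw [hsq (F N), hFNe, hnorm s, ← hSdef]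
      have hmem : (2 * S ^ q) ∈ {r : ℝ | ∃ (k : ℕ) (P : ℕ → ℕ), 0 < k ∧ StrictMono P ∧
          r = (∑ i ∈ range (k - 1), ‖X N (P i) - X N (P (i + 1))‖ ^ 2)
            + ‖X N (P (k - 1))‖ ^ 2} := by
        refine ⟨2, fun i => i * N, by norm_num, ?_, ?_⟩
        · intro b c hbc
          exact mul_lt_mul_of_pos_right hbc (by omega)
        · show 2 * S ^ q = (∑ i ∈ range (2 - 1), ‖X N (i * N) - X N ((i + 1) * N)‖ ^ 2)
            + ‖X N ((2 - 1) * N)‖ ^ 2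
          rw [show (2:ℕ) - 1 = 1 from rfl, Finset.sum_range_one]
          have e0 : X N (0 * N) = F 0 := by
            rw [hX]
            norm_num
          have e1 : X N ((0 + 1) * N) = F N := by
            rw [hX]
            norm_num
          rw [e0, e1, hF0, zero_sub, norm_neg, hFN]
          ring
      have hBdd : BddAbove {r : ℝ | ∃ (k : ℕ) (P : ℕ → ℕ), 0 < k ∧ StrictMono P ∧
          r = (∑ i ∈ range (k - 1), ‖X N (P i) - X N (P (i + 1))‖ ^ 2)
            + ‖X N (P (k - 1))‖ ^ 2} := ⟨2 * S ^ q, fun r hr => hbound N r hr⟩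
      have h2 : 2 * S ^ q ≤ jnormSq (X N) := by
        rw [jnormSq]
        exact le_csSup hBdd hmem
      have h3 : A ≤ jnorm (X N) := by
        show A ≤ Real.sqrt (jnormSq (X N) / 2)
        calc A = Real.sqrt (S ^ q) := by rw [← hA2, Real.sqrt_sq hA0]
          _ ≤ Real.sqrt (jnormSq (X N) / 2) := Real.sqrt_le_sqrt (by linarith)
      refine le_trans h3 ?_
      rw [hkn]
      refine le_ciSup (f := fun n => jnorm (X n)) ⟨A, ?_⟩ N
      rintro r ⟨n, rfl⟩
      exact hjle n
    · -- upper bound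
      have hup : knorm F ≤ A := by
        rw [hkn]
        exact ciSup_le hjle
      have hsqrt2 : 1 ≤ Real.sqrt 2 := by
        rw [show (1:ℝ) = Real.sqrt 1 by simp]
        exact Real.sqrt_le_sqrt (by norm_num)
      calc knorm F ≤ A := hup
        _ ≤ Real.sqrt 2 * A := le_mul_of_one_le_left hA0 hsqrt2
  exact key _ (fun m => by rw [Finset.sum_filter])
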